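/- Let A be a CFG-ring and U ⊆ Aⁿ. Then U is an algebraic variety over A if and only if U, with the metric d(x,y) = e(x₁−y₁) ∨ ⋯ ∨ e(xₙ−yₙ) restricted from Aⁿ, is a CFG-space over B(A). -/
import Mathlib


/-- The order on idempotents of a commutative ring: `a ≤ b` iff `a * b = a`. -/
def ale {A : Type} [CommRing A] (a b : A) : Prop := a * b = a

/-- The join `v 0 ∨ v 1 ∨ ⋯ ∨ v (n-1)` of a finite family of idempotents, where
`a ∨ b = a + b - a * b`. -/
def bigSup {A : Type} [CommRing A] : {n : ℕ} → (Fin n → A) → A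
  | 0, _ => 0
  | _ + 1, v => v 0 + bigSup (Fin.tail v) - v 0 * bigSup (Fin.tail v)

/-- `A` is a CFG-ring: a commutative von Neumann regular ring having finitely many
elements `x₁, …, xₖ` such that every element of `A` is of the form `∑ aᵢ xᵢ` with
`aᵢ` idempotents having pairwise zero products and summing to `1`. -/
def IsCFGRing (A : Type) [CommRing A] : Prop :=
  (∀ a : A, ∃ b, a * b * a = a) ∧
  ∃ (k : ℕ) (xs : Fin k → A), ∀ x : A, ∃ a : Fin k → A,
    (∀ i, a i * a i = a i) ∧ (∀ i j, i ≠ j → a i * a j = 0) ∧ (∑ i, a i) = 1 ∧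
    x = ∑ i, a i * xs i

/-- `e` assigns to each `a : A` the unique idempotent `e a` with `aA = (e a)A`. -/
def IsIdemGen {A : Type} [CommRing A] (e : A → A) : Prop :=
  ∀ a : A, e a * e a = e a ∧ Ideal.span {a} = Ideal.span {e a}

/-- The Boolean metric on `Aⁿ`: `d x y = e(x₁ - y₁) ∨ ⋯ ∨ e(xₙ - yₙ)`. -/
def dVec {A : Type} [CommRing A] (e : A → A) {n : ℕ} (x y : Fin n → A) : A :=
  bigSup fun i => e (x i - y i)

/-- `U` is an algebraic variety: the common zero set of finitely many polynomials. -/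
def IsAlgebraicVariety {A : Type} [CommRing A] {n : ℕ} (U : Set (Fin n → A)) : Prop :=
  ∃ (k : ℕ) (ps : Fin k → MvPolynomial (Fin n) A),
    U = {x : Fin n → A | ∀ j, MvPolynomial.eval x (ps j) = 0}

/-- A subset `S` of a space with `A`-valued Boolean metric `d` is convex: all convex
combinations (with idempotent coefficients having pairwise zero products and summing
to `1`) of points of `S` exist in `S`. -/
def IsConvexSubA {A Z : Type} [CommRing A] (d : Z → Z → A) (S : Set Z) : Prop :=
  ∀ (k : ℕ) (a : Fin k → A) (xs : Fin k → Z), (∀ i, xs i ∈ S) →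
    (∀ i, a i * a i = a i) → (∀ i j, i ≠ j → a i * a j = 0) → (∑ i, a i) = 1 →
    ∃ x ∈ S, ∀ i, a i * d x (xs i) = 0

/-- `S` is a CFG-space: convex, and finitely many points of `S` have every point of `S`
as a convex combination. -/
def IsCFGSubA {A Z : Type} [CommRing A] (d : Z → Z → A) (S : Set Z) : Prop :=
  IsConvexSubA d S ∧
  ∃ (k : ℕ) (xs : Fin k → Z), (∀ i, xs i ∈ S) ∧
    ∀ x ∈ S, ∃ a : Fin k → A,
      (∀ i, a i * a i = a i) ∧ (∀ i j, i ≠ j → a i * a j = 0) ∧ (∑ i, a i) = 1 ∧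
      ∀ i, a i * d x (xs i) = 0

namespace CFGaux
variable {A : Type} [CommRing A]

lemma mul_e_self (e : A → A) (he : IsIdemGen e) (a : A) : a * e a = a := by
  have h : a ∈ Ideal.span {e a} := by
    rw [← (he a).2]; exact Ideal.mem_span_singleton_self a
  obtain ⟨s, hs⟩ := Ideal.mem_span_singleton'.mp h
  calc a * e a = s * e a * e a := by rw [hs]
    _ = s * (e a * e a) := by ring
    _ = s * e a := by rw [(he a).1]
    _ = a := hs

lemma e_eq_mul (e : A → A) (he : IsIdemGen e) (a : A) : ∃ s, e a = s * a := by
  have h : e a ∈ Ideal.span {a} := by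
    rw [(he a).2]; exact Ideal.mem_span_singleton_self _
  obtain ⟨s, hs⟩ := Ideal.mem_span_singleton'.mp h
  exact ⟨s, hs.symm⟩

lemma mul_e_zero (e : A → A) (he : IsIdemGen e) (z a : A) :
    z * e a = 0 ↔ z * a = 0 := by
  constructor
  · intro h
    calc z * a = z * (a * e a) := by rw [mul_e_self e he a]
      _ = z * e a * a := by ring
      _ = 0 := by rw [h, zero_mul]
  · intro h
    obtain ⟨s, hs⟩ := e_eq_mul e he a
    rw [hs]
    calc z * (s * a) = s * (z * a) := by ring
      _ = 0 := by rw [h, mul_zero]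

lemma bigSup_succ {m : ℕ} (v : Fin (m + 1) → A) :
    bigSup v = v 0 + bigSup (Fin.tail v) - v 0 * bigSup (Fin.tail v) := rfl

lemma bigSup_idem : ∀ {m : ℕ} (v : Fin m → A), (∀ c, v c * v c = v c) →
    bigSup v * bigSup v = bigSup v
  | 0, v, _ => by simp [bigSup]
  | m + 1, v, hv => by
    have hs := bigSup_idem (Fin.tail v) (fun c => hv c.succ)
    have hu := hv 0
    rw [bigSup_succ]
    set s := bigSup (Fin.tail v)
    linear_combination (1 + s * s - 2 * s) * hu + (1 - v 0) * hs

lemma mul_bigSup_zero : ∀ {m : ℕ} (v : Fin m → A), (∀ c, v c * v c = v c) →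
    ∀ z : A, (z * bigSup v = 0 ↔ ∀ c, z * v c = 0)
  | 0, v, _, z => by
    constructor
    · intro _ c; exact c.elim0
    · intro _; show z * (0 : A) = 0; rw [mul_zero]
  | m + 1, v, hv, z => by
    have hs := bigSup_idem (Fin.tail v) (fun c => hv c.succ)
    constructor
    · intro h
      have h0 : z * v 0 = 0 := by
        have hv0 : v 0 * bigSup v = v 0 := by
          rw [bigSup_succ]
          set s := bigSup (Fin.tail v)
          linear_combination (1 - s) * hv 0
        calc z * v 0 = z * (v 0 * bigSup v) := by rw [hv0]
          _ = z * bigSup v * v 0 := by ring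
          _ = 0 := by rw [h, zero_mul]
      have hS : z * bigSup (Fin.tail v) = 0 := by
        have hvs : bigSup (Fin.tail v) * bigSup v = bigSup (Fin.tail v) := by
          rw [bigSup_succ]
          set s := bigSup (Fin.tail v)
          linear_combination (1 - v 0) * hs
        calc z * bigSup (Fin.tail v) = z * (bigSup (Fin.tail v) * bigSup v) := by rw [hvs]
          _ = z * bigSup v * bigSup (Fin.tail v) := by ring
          _ = 0 := by rw [h, zero_mul]
      intro c
      refine Fin.cases h0 (fun i => ?_) c
      exact (mul_bigSup_zero (Fin.tail v) (fun c => hv c.succ) z).mp hS i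
    · intro h
      rw [bigSup_succ]
      have hT := (mul_bigSup_zero (Fin.tail v) (fun c => hv c.succ) z).mpr (fun c => h c.succ)
      have h0 := h 0
      set s := bigSup (Fin.tail v)
      linear_combination (1 - s) * h0 + hT

lemma mul_dVec_zero (e : A → A) (he : IsIdemGen e) {n : ℕ} (z : A) (x y : Fin n → A) :
    z * dVec e x y = 0 ↔ ∀ c, z * (x c - y c) = 0 := by
  unfold dVec
  rw [mul_bigSup_zero _ (fun c => (he _).1) z]
  exact forall_congr' fun c => mul_e_zero e he z _

lemma mul_eval {n : ℕ} (a : A) (x y : Fin n → A) (h : ∀ c, a * x c = a * y c)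
    (p : MvPolynomial (Fin n) A) :
    a * MvPolynomial.eval x p = a * MvPolynomial.eval y p := by
  induction p using MvPolynomial.induction_on with
  | C r => simp
  | add p q hp hq => simp only [map_add, mul_add, hp, hq]
  | mul_X p i hp =>
    simp only [map_mul, MvPolynomial.eval_X]
    linear_combination x i * hp + MvPolynomial.eval y p * h i

lemma mul_blend {k : ℕ} (a : Fin k → A) (hidem : ∀ i, a i * a i = a i)
    (horth : ∀ i j, i ≠ j → a i * a j = 0) (t : Fin k → A) (i : Fin k) :
    a i * (∑ j, a j * t j) = a i * t i := by
  rw [Finset.mul_sum, Finset.sum_eq_single i]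
  · rw [← mul_assoc, hidem i]
  · intro j _ hj
    rw [← mul_assoc, horth i j (Ne.symm hj), zero_mul]
  · intro h; exact absurd (Finset.mem_univ i) h

lemma prod_idem {ι : Type*} [Fintype ι] (f : ι → A) (h : ∀ i, f i * f i = f i) :
    (∏ i, f i) * (∏ i, f i) = ∏ i, f i := by
  rw [← Finset.prod_mul_distrib]
  exact Finset.prod_congr rfl fun i _ => h i

lemma prod_e_zero (e : A → A) (he : IsIdemGen e) {k : ℕ} (a : Fin k → A)
    (h : (∏ i, a i) = 0) : (∏ i, e (a i)) = 0 := by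
  choose s hs using fun i => e_eq_mul e he (a i)
  calc (∏ i, e (a i)) = ∏ i, s i * a i := Finset.prod_congr rfl fun i _ => hs i
    _ = (∏ i, s i) * ∏ i, a i := Finset.prod_mul_distrib
    _ = 0 := by rw [h, mul_zero]

/-- `parts b i = b₀⋯b_{i-1}(1 - bᵢ)`, a partition of `1 - ∏ b` -/
def parts : {m : ℕ} → (Fin m → A) → Fin m → A
  | 0, _ => fun i => i.elim0
  | _ + 1, b => Fin.cons (1 - b 0) (fun i => b 0 * parts (Fin.tail b) i)

lemma parts_zero {m : ℕ} (b : Fin (m + 1) → A) : parts b 0 = 1 - b 0 := rfl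

lemma parts_succ {m : ℕ} (b : Fin (m + 1) → A) (i : Fin m) :
    parts b i.succ = b 0 * parts (Fin.tail b) i := by
  simp [parts]

lemma parts_idem : ∀ {m : ℕ} (b : Fin m → A), (∀ i, b i * b i = b i) →
    ∀ i, parts b i * parts b i = parts b i
  | 0, _, _, i => i.elim0
  | m + 1, b, hb, i => by
    refine Fin.cases ?_ (fun j => ?_) i
    · rw [parts_zero]; linear_combination hb 0
    · rw [parts_succ]
      have hI := parts_idem (Fin.tail b) (fun i => hb i.succ) j
      set P := parts (Fin.tail b) j
      linear_combination (P * P) * hb 0 + b 0 * hI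

lemma parts_mul_b : ∀ {m : ℕ} (b : Fin m → A), (∀ i, b i * b i = b i) →
    ∀ i, parts b i * b i = 0
  | 0, _, _, i => i.elim0
  | m + 1, b, hb, i => by
    refine Fin.cases ?_ (fun j => ?_) i
    · rw [parts_zero]; linear_combination -(hb 0)
    · rw [parts_succ]
      have hI := parts_mul_b (Fin.tail b) (fun i => hb i.succ) j
      have : b j.succ = Fin.tail b j := rfl
      rw [this]
      linear_combination b 0 * hI

lemma parts_orth : ∀ {m : ℕ} (b : Fin m → A), (∀ i, b i * b i = b i) →
    ∀ i j, i ≠ j → parts b i * parts b j = 0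
  | 0, _, _, i, _, _ => i.elim0
  | m + 1, b, hb, i, j, hij => by
    refine Fin.cases (motive := fun i => i ≠ j → parts b i * parts b j = 0) ?_ (fun i' => ?_) i hij
    · -- i = 0
      refine Fin.cases (motive := fun j => (0 : Fin (m+1)) ≠ j → parts b 0 * parts b j = 0) ?_ (fun j' => ?_) j
      · intro h; exact absurd rfl h
      · intro _
        rw [parts_zero, parts_succ]
        linear_combination -(parts (Fin.tail b) j') * hb 0
    · refine Fin.cases (motive := fun j => i'.succ ≠ j → parts b i'.succ * parts b j = 0) ?_ (fun j' => ?_) j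
      · intro _
        rw [parts_zero, parts_succ]
        linear_combination -(parts (Fin.tail b) i') * hb 0
      · intro h
        rw [parts_succ, parts_succ]
        have hI := parts_orth (Fin.tail b) (fun i => hb i.succ) i' j'
          (fun hc => h (by rw [hc]))
        linear_combination (b 0 * b 0) * hI

lemma parts_sum : ∀ {m : ℕ} (b : Fin m → A),
    (∑ i, parts b i) = 1 - ∏ i, b i
  | 0, b => by simp
  | m + 1, b => by
    rw [Fin.sum_univ_succ, Fin.prod_univ_succ]
    have hI := parts_sum (Fin.tail b)
    have hrw : ∀ i : Fin m, parts b i.succ = b 0 * parts (Fin.tail b) i := parts_succ b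
    simp only [hrw, parts_zero, ← Finset.mul_sum, hI]
    have : ∀ i : Fin m, b i.succ = Fin.tail b i := fun _ => rfl
    simp only [this]
    ring


lemma prod_bigSup_zero : ∀ {k n : ℕ} (E : Fin k → Fin n → A),
    (∀ i c, E i c * E i c = E i c) →
    ∀ z : A, (∀ f : Fin k → Fin n, z * ∏ i, E i (f i) = 0) →
    z * ∏ i, bigSup (E i) = 0
  | 0, n, E, _, z, h => by simpa using h (fun i => i.elim0)
  | k + 1, n, E, hE, z, h => by
    rw [Fin.prod_univ_succ]
    have key : ∀ c, z * (∏ i : Fin k, bigSup (E i.succ)) * E 0 c = 0 := by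
      intro c
      have hrec := prod_bigSup_zero (fun i => E i.succ) (fun i c => hE i.succ c) (z * E 0 c)
        (fun g => by
          have h2 := h (Fin.cons c g)
          rw [Fin.prod_univ_succ] at h2
          simp only [Fin.cons_zero, Fin.cons_succ] at h2
          linear_combination h2)
      linear_combination hrec
    have := (mul_bigSup_zero (E 0) (hE 0) (z * ∏ i : Fin k, bigSup (E i.succ))).mpr key
    linear_combination this


end CFGaux



/-- Over a CFG-ring `A`, a subset `U ⊆ Aⁿ` is an algebraic variety iff it is a
CFG-metric subspace of `Aⁿ` (for the metric `d x y = e(x₁-y₁) ∨ ⋯ ∨ e(xₙ-yₙ)`). -/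
theorem stmt15 {A : Type} [CommRing A] (hA : IsCFGRing A)
    (e : A → A) (he : IsIdemGen e)
    {n : ℕ} (U : Set (Fin n → A)) :
    IsAlgebraicVariety U ↔ IsCFGSubA (dVec e) U := by

  constructor
  · rintro ⟨K, ps, hU⟩
    have hmem : ∀ x, x ∈ U ↔ ∀ j, MvPolynomial.eval x (ps j) = 0 := by
      intro x; rw [hU]; exact Iff.rfl
    constructor
    · -- convexity
      intro k a xs hxs hidem horth hsum
      have hax : ∀ i c, a i * (∑ l, a l * xs l c) = a i * xs i c := fun i c =>
        CFGaux.mul_blend a hidem horth (fun l => xs l c) i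
      refine ⟨fun c => ∑ l, a l * xs l c, ?_, ?_⟩
      · refine (hmem _).mpr fun j => ?_
        have hzero : ∀ i, MvPolynomial.eval (xs i) (ps j) = 0 := fun i => (hmem _).mp (hxs i) j
        calc MvPolynomial.eval (fun c => ∑ l, a l * xs l c) (ps j)
            = (∑ i, a i) * MvPolynomial.eval (fun c => ∑ l, a l * xs l c) (ps j) := by
              rw [hsum, one_mul]
          _ = ∑ i, a i * MvPolynomial.eval (fun c => ∑ l, a l * xs l c) (ps j) :=
              Finset.sum_mul _ _ _
          _ = ∑ i, a i * MvPolynomial.eval (xs i) (ps j) :=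
              Finset.sum_congr rfl fun i _ =>
                CFGaux.mul_eval (a i) _ (xs i) (hax i) (ps j)
          _ = 0 := by simp [hzero]
      · intro i
        refine (CFGaux.mul_dVec_zero e he _ _ _).mpr fun c => ?_
        linear_combination hax i c
    · -- finite generation
      by_cases hne : ∃ x₀, x₀ ∈ U
      · obtain ⟨x₀, hx₀⟩ := hne
        obtain ⟨kk, XS, hXS⟩ := hA.2
        let v : (Fin n → Fin kk) → Fin n → A := fun g c => XS (g c)
        let b : (Fin n → Fin kk) → A := fun g =>
          bigSup (fun t : Fin K => e (MvPolynomial.eval (v g) (ps t)))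
        have hbidem : ∀ g, b g * b g = b g := fun g =>
          CFGaux.bigSup_idem _ (fun t => (he _).1)
        let w : (Fin n → Fin kk) → Fin n → A := fun g c => (1 - b g) * v g c + b g * x₀ c
        have hwU : ∀ g, w g ∈ U := by
          intro g
          refine (hmem _).mpr fun t => ?_
          have h1 : (1 - b g) * MvPolynomial.eval (w g) (ps t) = 0 := by
            have hco : ∀ c, (1 - b g) * w g c = (1 - b g) * v g c := by
              intro c
              show (1 - b g) * ((1 - b g) * v g c + b g * x₀ c) = (1 - b g) * v g c
              linear_combination (v g c - x₀ c) * hbidem g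
            rw [CFGaux.mul_eval _ _ _ hco]
            have hb0 : (1 - b g) * b g = 0 := by linear_combination -(hbidem g)
            have hb1 : (1 - b g) * bigSup (fun t : Fin K =>
                e (MvPolynomial.eval (v g) (ps t))) = 0 := hb0
            have := (CFGaux.mul_bigSup_zero _ (fun t => (he _).1) (1 - b g)).mp hb1 t
            exact (CFGaux.mul_e_zero e he _ _).mp this
          have h2 : b g * MvPolynomial.eval (w g) (ps t) = 0 := by
            have hco : ∀ c, b g * w g c = b g * x₀ c := by
              intro c
              show b g * ((1 - b g) * v g c + b g * x₀ c) = b g * x₀ c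
              linear_combination (x₀ c - v g c) * hbidem g
            rw [CFGaux.mul_eval _ _ _ hco, (hmem x₀).mp hx₀ t, mul_zero]
          linear_combination h1 + h2
        refine ⟨Fintype.card (Fin n → Fin kk),
          fun j => w ((Fintype.equivFin (Fin n → Fin kk)).symm j), fun j => hwU _, ?_⟩
        intro x hx
        choose α hα1 hα2 hα3 hα4 using fun c => hXS (x c)
        let Ag : (Fin n → Fin kk) → A := fun g => ∏ c, α c (g c)
        have hAidem : ∀ g, Ag g * Ag g = Ag g := fun g =>
          CFGaux.prod_idem _ (fun c => hα1 c (g c))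
        have hAorth : ∀ g g', g ≠ g' → Ag g * Ag g' = 0 := by
          intro g g' hgg
          obtain ⟨c, hc⟩ := Function.ne_iff.mp hgg
          calc Ag g * Ag g' = ∏ c, α c (g c) * α c (g' c) := Finset.prod_mul_distrib.symm
            _ = 0 := Finset.prod_eq_zero (Finset.mem_univ c) (hα2 c _ _ hc)
        have hAsum : (∑ g, Ag g) = 1 := by
          have hps := Finset.prod_univ_sum (fun _ : Fin n => (Finset.univ : Finset (Fin kk)))
            (fun c i => α c i)
          rw [Fintype.piFinset_univ] at hps
          calc (∑ g, Ag g) = ∏ c, ∑ i, α c i := hps.symm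
            _ = ∏ c : Fin n, (1 : A) := Finset.prod_congr rfl fun c _ => hα3 c
            _ = 1 := Finset.prod_const_one
        have hAx : ∀ g c, Ag g * x c = Ag g * XS (g c) := by
          intro g c
          have h' : α c (g c) * x c = α c (g c) * XS (g c) := by
            rw [hα4 c]
            exact CFGaux.mul_blend (α c) (hα1 c) (hα2 c) XS (g c)
          have hfac := Finset.mul_prod_erase Finset.univ (fun c' => α c' (g c'))
            (Finset.mem_univ c)
          calc Ag g * x c
              = (α c (g c) * ∏ c' ∈ Finset.univ.erase c, α c' (g c')) * x c := by
                rw [hfac]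
            _ = (∏ c' ∈ Finset.univ.erase c, α c' (g c')) * (α c (g c) * x c) := by ring
            _ = (∏ c' ∈ Finset.univ.erase c, α c' (g c')) * (α c (g c) * XS (g c)) := by
                rw [h']
            _ = (α c (g c) * ∏ c' ∈ Finset.univ.erase c, α c' (g c')) * XS (g c) := by ring
            _ = Ag g * XS (g c) := by rw [hfac]
        have hAb : ∀ g, Ag g * b g = 0 := by
          intro g
          show Ag g * bigSup (fun t : Fin K => e (MvPolynomial.eval (v g) (ps t))) = 0
          refine (CFGaux.mul_bigSup_zero _ (fun t => (he _).1) _).mpr fun t => ?_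
          refine (CFGaux.mul_e_zero e he _ _).mpr ?_
          have heq : Ag g * MvPolynomial.eval (v g) (ps t) = Ag g * MvPolynomial.eval x (ps t) :=
            CFGaux.mul_eval _ _ _ (fun c => (hAx g c).symm) _
          rw [heq, (hmem x).mp hx t, mul_zero]
        refine ⟨fun j => Ag ((Fintype.equivFin (Fin n → Fin kk)).symm j),
          fun j => hAidem _,
          fun j j' hjj => hAorth _ _
            (fun hc => hjj ((Fintype.equivFin (Fin n → Fin kk)).symm.injective hc)), ?_, ?_⟩
        · rw [Equiv.sum_comp (Fintype.equivFin (Fin n → Fin kk)).symm Ag]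
          exact hAsum
        · intro j
          refine (CFGaux.mul_dVec_zero e he _ _ _).mpr fun c => ?_
          have h1 := hAx ((Fintype.equivFin (Fin n → Fin kk)).symm j) c
          have h2 := hAb ((Fintype.equivFin (Fin n → Fin kk)).symm j)
          show Ag _ * (x c - ((1 - b _) * v _ c + b _ * x₀ c)) = 0
          linear_combination h1 + (v ((Fintype.equivFin (Fin n → Fin kk)).symm j) c - x₀ c) * h2
      · refine ⟨0, fun i => i.elim0, fun i => i.elim0, ?_⟩
        intro x hx
        exact absurd ⟨x, hx⟩ hne
  · rintro ⟨hconv, k, ys, hysU, hgen⟩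
    have hevalP : ∀ (x : Fin n → A) (f : Fin k → Fin n),
        MvPolynomial.eval x (∏ i, (MvPolynomial.X (f i) - MvPolynomial.C (ys i (f i))))
          = ∏ i, (x (f i) - ys i (f i)) := by
      intro x f
      rw [map_prod]
      exact Finset.prod_congr rfl fun i _ => by simp
    refine ⟨Fintype.card (Fin k → Fin n),
      fun j => ∏ i, (MvPolynomial.X ((Fintype.equivFin (Fin k → Fin n)).symm j i)
        - MvPolynomial.C (ys i ((Fintype.equivFin (Fin k → Fin n)).symm j i))),
      Set.ext fun x => ?_⟩
    simp only [Set.mem_setOf_eq]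
    constructor
    · intro hx j
      obtain ⟨a, hi, ho, hs, hd⟩ := hgen x hx
      have hxc : ∀ i c, a i * (x c - ys i c) = 0 := fun i c =>
        (CFGaux.mul_dVec_zero e he _ _ _).mp (hd i) c
      rw [hevalP x ((Fintype.equivFin (Fin k → Fin n)).symm j)]
      set f := (Fintype.equivFin (Fin k → Fin n)).symm j with hf
      calc (∏ i, (x (f i) - ys i (f i)))
          = (∑ l, a l) * ∏ i, (x (f i) - ys i (f i)) := by rw [hs, one_mul]
        _ = ∑ l, a l * ∏ i, (x (f i) - ys i (f i)) := Finset.sum_mul _ _ _ ..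
        _ = 0 := Finset.sum_eq_zero fun l _ => by
            rw [← Finset.mul_prod_erase Finset.univ _ (Finset.mem_univ l)]
            calc a l * ((x (f l) - ys l (f l)) * ∏ i ∈ Finset.univ.erase l, (x (f i) - ys i (f i)))
                = (a l * (x (f l) - ys l (f l)))
                    * ∏ i ∈ Finset.univ.erase l, (x (f i) - ys i (f i)) := by ring
              _ = 0 := by rw [hxc l (f l), zero_mul]
    · intro hx
      have hPf : ∀ f : Fin k → Fin n, (∏ i, (x (f i) - ys i (f i))) = 0 := by
        intro f
        have h0 := hx ((Fintype.equivFin (Fin k → Fin n)) f)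
        rwa [Equiv.symm_apply_apply, hevalP] at h0
      have hbidem : ∀ i, dVec e x (ys i) * dVec e x (ys i) = dVec e x (ys i) := fun i =>
        CFGaux.bigSup_idem _ (fun c => (he _).1)
      have hprodb : (∏ i, dVec e x (ys i)) = 0 := by
        have h0 := CFGaux.prod_bigSup_zero (fun i c => e (x c - ys i c))
          (fun i c => (he _).1) 1
          (fun f => by
            rw [one_mul]
            exact CFGaux.prod_e_zero e he _ (hPf f))
        rw [one_mul] at h0
        exact h0
      have hsum : (∑ i, CFGaux.parts (fun i => dVec e x (ys i)) i) = 1 := by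
        rw [CFGaux.parts_sum, hprodb, sub_zero]
      obtain ⟨x', hx'U, hx'd⟩ := hconv k (CFGaux.parts (fun i => dVec e x (ys i))) ys hysU
        (CFGaux.parts_idem _ hbidem) (CFGaux.parts_orth _ hbidem) hsum
      have hxx' : x = x' := by
        funext c
        have hterm : ∀ i, CFGaux.parts (fun i => dVec e x (ys i)) i * (x c - x' c) = 0 := by
          intro i
          have h1 : CFGaux.parts (fun i => dVec e x (ys i)) i * (x c - ys i c) = 0 :=
            (CFGaux.mul_dVec_zero e he _ _ _).mp (CFGaux.parts_mul_b _ hbidem i) c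
          have h2 : CFGaux.parts (fun i => dVec e x (ys i)) i * (x' c - ys i c) = 0 :=
            (CFGaux.mul_dVec_zero e he _ _ _).mp (hx'd i) c
          linear_combination h1 - h2
        have hz : x c - x' c = 0 := by
          calc x c - x' c
              = (∑ i, CFGaux.parts (fun i => dVec e x (ys i)) i) * (x c - x' c) := by
                rw [hsum, one_mul]
            _ = ∑ i, CFGaux.parts (fun i => dVec e x (ys i)) i * (x c - x' c) :=
                Finset.sum_mul _ _ _
            _ = 0 := Finset.sum_eq_zero fun i _ => hterm i
        exact sub_eq_zero.mp hz
      rw [hxx']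
      exact hx'U
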